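/- Let m be a positive integer that is not a power of 2, and let a be a real number with |a| ≤ 1. If there exists a real number b with T_m(b) = a such that b is constructible over the subfield ℚ(a) of ℝ generated by a, then a is an algebraic number (algebraic over ℚ). -/

import Mathlib

open Polynomial

set_option maxHeartbeats 2000000
set_option synthInstance.maxHeartbeats 1000000

/-- A real number `b` is constructible over a subfield `F` of `ℝ` if there is a finite
chain of subfields `F = F₀ ⊆ F₁ ⊆ … ⊆ F_k` of `ℝ` with `b ∈ F_k`, each step obtained by
adjoining a square root of an element of the previous field. -/
def IsConstructibleOver (F : Subfield ℝ) (b : ℝ) : Prop :=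
  ∃ (k : ℕ) (Fs : ℕ → Subfield ℝ), Fs 0 = F ∧ b ∈ Fs k ∧
    ∀ i < k, ∃ x : ℝ, x ^ 2 ∈ Fs i ∧ Fs (i + 1) = Subfield.closure (↑(Fs i) ∪ {x})

namespace MSectAux

open Polynomial.Chebyshev Module

/-! ### Degree and leading coefficient of Chebyshev polynomials over `ℚ` -/

lemma cheb_deg : ∀ n : ℕ, ((T ℚ ((n : ℤ) + 1)).natDegree = n + 1 ∧
    (T ℚ ((n : ℤ) + 1)).leadingCoeff = 2 ^ n)
  | 0 => by
      constructor
      · rw [show ((0 : ℕ) : ℤ) + 1 = 1 from rfl, T_one]; simp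
      · rw [show ((0 : ℕ) : ℤ) + 1 = 1 from rfl, T_one]; simp
  | 1 => by
      have ht : T ℚ (((1 : ℕ) : ℤ) + 1) = 2 * X ^ 2 - 1 := by
        rw [show ((1 : ℕ) : ℤ) + 1 = 2 by norm_num, T_two]
      rw [ht]
      have hd : (2 * X ^ 2 - 1 : ℚ[X]).natDegree = 2 := by compute_degree!
      refine ⟨hd, ?_⟩
      rw [leadingCoeff, hd]
      rw [coeff_sub]
      simp [coeff_one]
  | (k + 2) => by
      obtain ⟨hd1, hl1⟩ := cheb_deg (k + 1)
      obtain ⟨hd0, hl0⟩ := cheb_deg k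
      have hrec : T ℚ (((k : ℤ) + 2) + 1) = 2 * X * T ℚ ((k : ℤ) + 1 + 1) - T ℚ ((k : ℤ) + 1) := by
        have := T_add_two ℚ ((k : ℤ) + 1)
        convert this using 2 <;> push_cast <;> ring
      push_cast
      rw [hrec]
      push_cast at hd1 hl1 hd0 hl0
      have hT1ne : T ℚ ((k : ℤ) + 1 + 1) ≠ 0 := by
        intro h
        rw [h] at hl1
        simp at hl1
        exact absurd hl1.symm (by positivity)
      have hXne : (2 * X : ℚ[X]) ≠ 0 := by
        intro h
        have := congrArg (fun p => Polynomial.coeff p 1) h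
        simp at this
      have hdm : (2 * X * T ℚ ((k : ℤ) + 1 + 1)).natDegree = k + 3 := by
        rw [natDegree_mul hXne hT1ne, hd1]
        have : (2 * X : ℚ[X]).natDegree = 1 := by compute_degree!
        omega
      have hlt : (T ℚ ((k : ℤ) + 1)).natDegree < (2 * X * T ℚ ((k : ℤ) + 1 + 1)).natDegree := by
        rw [hdm, hd0]; omega
      constructor
      · rw [natDegree_sub_eq_left_of_natDegree_lt hlt, hdm]
      · have hltd : (T ℚ ((k : ℤ) + 1)).degree < (2 * X * T ℚ ((k : ℤ) + 1 + 1)).degree :=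
          degree_lt_degree hlt
        rw [leadingCoeff_sub_of_degree_lt hltd, leadingCoeff_mul, hl1]
        have h2X : (2 * X : ℚ[X]).leadingCoeff = 2 := by
          rw [leadingCoeff]
          have : (2 * X : ℚ[X]).natDegree = 1 := by compute_degree!
          rw [this]; simp
        rw [h2X]; ring

lemma Tq_natDegree (m : ℕ) (hm : 0 < m) : (T ℚ (m : ℤ)).natDegree = m := by
  obtain ⟨n, rfl⟩ : ∃ n, m = n + 1 := ⟨m - 1, by omega⟩
  have := (cheb_deg n).1
  rwa [show ((n : ℤ) + 1) = ((n + 1 : ℕ) : ℤ) by push_cast; ring] at this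

/-! ### Irreducibility of `T_m(Y) - X` -/

noncomputable def psi : (Polynomial ℚ)[X] →+* (Polynomial ℚ)[X] :=
  eval₂RingHom (eval₂RingHom (C.comp C) X) (C X)

lemma psi_C (p : ℚ[X]) : psi (C p) = eval₂ (C.comp C) X p := by
  simp [psi, eval₂RingHom]

lemma psi_X : psi (X : ℚ[X][X]) = C X := by simp [psi]

lemma psi_CC (c : ℚ) : psi (C (C c)) = C (C c) := by
  rw [psi_C, eval₂_C]; rfl

lemma psi_CX : psi (C (X : ℚ[X])) = X := by rw [psi_C, eval₂_X]

lemma psi_psi : psi.comp psi = RingHom.id _ := by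
  apply ringHom_ext'
  · apply ringHom_ext'
    · ext c
      simp [RingHom.comp_apply, psi_CC]
    · show psi (psi (C X)) = C X
      rw [psi_CX, psi_X]
  · show psi (psi X) = X
    rw [psi_X, psi_CX]

noncomputable def psiEquiv : ℚ[X][X] ≃+* ℚ[X][X] :=
  RingEquiv.ofRingHom psi psi psi_psi psi_psi

lemma psi_mapC (p : ℚ[X]) : psi (p.map C) = C p := by
  show eval₂ (eval₂RingHom (C.comp C) X : ℚ[X] →+* ℚ[X][X]) (C X) (p.map C) = C p
  rw [eval₂_map]
  have hcomp : ((eval₂RingHom (C.comp C) X : ℚ[X] →+* ℚ[X][X]).comp C : ℚ →+* ℚ[X][X])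
      = (C : ℚ[X] →+* ℚ[X][X]).comp (C : ℚ →+* ℚ[X]) := by
    ext c; simp
  rw [hcomp, ← hom_eval₂, eval₂_C_X]

lemma q0_irred (m : ℕ) (hm : 0 < m) :
    Irreducible ((T ℚ[X] (m : ℤ)) - C X) := by
  have hmap : T ℚ[X] (m : ℤ) = (T ℚ (m : ℤ)).map C := (map_T C (m : ℤ)).symm
  have hpsi : psi ((T ℚ[X] (m : ℤ)) - C X) = -(X - C (T ℚ (m : ℤ))) := by
    rw [map_sub, hmap, psi_mapC, psi_CX]; ring
  have hprime : Prime (psiEquiv ((T ℚ[X] (m : ℤ)) - C X)) := by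
    show Prime (psi _)
    rw [hpsi]
    exact (prime_X_sub_C _).neg
  exact ((MulEquiv.prime_iff psiEquiv).mp hprime).irreducible

lemma q0_primitive (m : ℕ) (hm : 0 < m) : ((T ℚ[X] (m : ℤ)) - C X).IsPrimitive := by
  obtain ⟨n, rfl⟩ : ∃ n, m = n + 1 := ⟨m - 1, by omega⟩
  obtain ⟨hd, hl⟩ := cheb_deg n
  have hmap : T ℚ[X] ((n : ℤ) + 1) = (T ℚ ((n : ℤ) + 1)).map C := (map_T C _).symm
  have hTC : (T ℚ[X] ((n : ℤ) + 1)).natDegree = n + 1 := by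
    rw [hmap, natDegree_map_eq_of_injective (C_injective)]
    exact hd
  have hTlc : (T ℚ[X] ((n : ℤ) + 1)).leadingCoeff = C ((2 : ℚ) ^ n) := by
    rw [hmap, leadingCoeff, natDegree_map_eq_of_injective (C_injective), hd, coeff_map,
      ← hd, ← leadingCoeff, hl]
  have hdeglt : (C (X : ℚ[X])).degree < (T ℚ[X] ((n : ℤ) + 1)).degree := by
    apply lt_of_le_of_lt (degree_C_le)
    rw [degree_eq_natDegree (fun h => by simp [h] at hTC), hTC]
    exact_mod_cast Nat.succ_pos n
  have hlcq : ((T ℚ[X] ((n : ℤ) + 1)) - C X).leadingCoeff = C ((2 : ℚ) ^ n) := by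
    rw [leadingCoeff_sub_of_degree_lt hdeglt, hTlc]
  intro r hr
  have hdvd : r ∣ ((T ℚ[X] ((n : ℤ) + 1)) - C X).leadingCoeff :=
    ((C_dvd_iff_dvd_coeff r _).mp hr) _
  rw [hlcq] at hdvd
  have hunit : IsUnit (C ((2 : ℚ) ^ n) : ℚ[X]) := isUnit_C.mpr (by norm_num)
  exact isUnit_of_dvd_unit hdvd hunit

noncomputable abbrev Lfr := FractionRing ℚ[X]

lemma q0_irred' (m : ℕ) (hm : 0 < m) :
    Irreducible (((T ℚ[X] (m : ℤ)) - C X).map (algebraMap ℚ[X] Lfr)) := by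
  letI := UniqueFactorizationMonoid.toNormalizedGCDMonoid ℚ[X]
  exact ((q0_primitive m hm).irreducible_iff_irreducible_map_fraction_map).mp (q0_irred m hm)

/-! ### The field `ℚ(a)` for `a` transcendental -/

lemma range_aeval_le (a : ℝ) (F : Subfield ℝ) (haF : a ∈ F) (p : ℚ[X]) :
    (aeval a) p ∈ F := by
  induction p using Polynomial.induction_on with
  | C c => simpa using SubfieldClass.ratCast_mem F c
  | add p q hp hq => simpa using add_mem hp hq
  | monomial n c ih =>
    simp only [map_mul, map_pow, Polynomial.aeval_C, aeval_X, map_pow] at *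
    exact mul_mem (by simpa using SubfieldClass.ratCast_mem F c) (pow_mem (by simpa using haF) _)

noncomputable def liftF (a : ℝ) (hT : Transcendental ℚ a) : Lfr →+* ℝ :=
  IsFractionRing.lift (g := (aeval a : ℚ[X] →ₐ[ℚ] ℝ).toRingHom)
    (transcendental_iff_injective.mp hT)

lemma liftF_fieldRange (a : ℝ) (hT : Transcendental ℚ a) :
    (liftF a hT).fieldRange = Subfield.closure {a} := by
  apply le_antisymm
  · rintro _ ⟨y, rfl⟩
    obtain ⟨p, q, hq, rfl⟩ := IsFractionRing.div_surjective (A := ℚ[X]) y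
    rw [map_div₀]
    simp only [liftF, IsFractionRing.lift_algebraMap]
    exact div_mem (range_aeval_le a _ (Subfield.subset_closure (Set.mem_singleton a)) p)
      (range_aeval_le a _ (Subfield.subset_closure (Set.mem_singleton a)) q)
  · rw [Subfield.closure_le]
    rintro x rfl
    exact ⟨algebraMap ℚ[X] Lfr X, by simp [liftF, IsFractionRing.lift_algebraMap]⟩

noncomputable def eF (a : ℝ) (hT : Transcendental ℚ a) :
    Lfr ≃+* ↥(Subfield.closure {a} : Subfield ℝ) := by
  refine RingEquiv.ofBijective
    ((liftF a hT).codRestrict (Subfield.closure {a}).toSubring (fun x => ?_)) ⟨?_, ?_⟩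
  · have : liftF a hT x ∈ (liftF a hT).fieldRange := ⟨x, rfl⟩
    rw [liftF_fieldRange] at this; exact this
  · intro x y h
    have := congrArg Subtype.val h
    exact (liftF a hT).injective this
  · rintro ⟨y, hy⟩
    rw [← liftF_fieldRange a hT] at hy
    obtain ⟨x, hx⟩ := hy
    exact ⟨x, Subtype.ext hx⟩

lemma eF_t (a : ℝ) (hT : Transcendental ℚ a) :
    ((eF a hT (algebraMap ℚ[X] Lfr X) : ↥(Subfield.closure {a} : Subfield ℝ)) : ℝ) = a := by
  show liftF a hT (algebraMap ℚ[X] Lfr X) = a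
  simp [liftF, IsFractionRing.lift_algebraMap]

lemma qF_irred (m : ℕ) (hm : 0 < m) (a : ℝ) (hT : Transcendental ℚ a) :
    Irreducible ((T ↥(Subfield.closure {a} : Subfield ℝ) (m : ℤ))
      - C ⟨a, Subfield.subset_closure (Set.mem_singleton a)⟩) := by
  set F := Subfield.closure {a}
  have hL : Irreducible ((T Lfr (m : ℤ)) - C (algebraMap ℚ[X] Lfr X)) := by
    have := q0_irred' m hm
    rwa [Polynomial.map_sub, map_T, Polynomial.map_C] at this
  have hirr := (MulEquiv.irreducible_iff (Polynomial.mapEquiv (eF a hT)).toMulEquiv).mpr hL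
  convert hirr using 1
  show _ = map ((eF a hT) : Lfr →+* ↥F) _
  rw [Polynomial.map_sub, map_T, Polynomial.map_C]
  congr 1
  exact congrArg C (Subtype.ext (eF_t a hT)).symm

/-! ### Constructibility and degrees -/

lemma step_lemma (K : Subfield ℝ) (x : ℝ) (hx : x ^ 2 ∈ K) :
    K ≤ Subfield.closure (↑K ∪ {x}) ∧
    Subfield.relfinrank K (Subfield.closure (↑K ∪ {x})) ∣ 2 ∧
    Subfield.relfinrank K (Subfield.closure (↑K ∪ {x})) ≠ 0 := by
  set L := Subfield.closure (↑K ∪ {x}) with hL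
  have hKL : K ≤ L := fun y hy => Subfield.subset_closure (Or.inl hy)
  have hp0 : (aeval x) (X ^ 2 - C (⟨x ^ 2, hx⟩ : ↥K)) = 0 := by
    simp only [map_sub, map_pow, aeval_X, Polynomial.aeval_C]
    show x ^ 2 - (x ^ 2 : ℝ) = 0
    ring
  have hmono : (X ^ 2 - C (⟨x ^ 2, hx⟩ : ↥K)).Monic := monic_X_pow_sub_C _ (by norm_num)
  have hint : IsIntegral ↥K x := ⟨X ^ 2 - C (⟨x ^ 2, hx⟩ : ↥K), hmono, by
    rw [← aeval_def]; exact hp0⟩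
  have hE : Subfield.extendScalars hKL = IntermediateField.adjoin ↥K {x} := by
    apply IntermediateField.toSubfield_injective
    rw [Subfield.extendScalars_toSubfield, IntermediateField.adjoin_toSubfield, hL]
    have hrange : Set.range ⇑(algebraMap ↥K ℝ) = (K : Set ℝ) := Subtype.range_coe
    rw [hrange]
  have hfr : Subfield.relfinrank K L = (minpoly ↥K x).natDegree := by
    rw [Subfield.relfinrank_eq_finrank_of_le hKL, hE, IntermediateField.adjoin.finrank hint]
  have hdle : (minpoly ↥K x).natDegree ≤ 2 := by
    have := Polynomial.natDegree_le_of_dvd (minpoly.dvd ↥K x hp0) hmono.ne_zero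
    simpa using this
  have hdpos : 0 < (minpoly ↥K x).natDegree := minpoly.natDegree_pos hint
  refine ⟨hKL, ?_, ?_⟩
  · rw [hfr]
    interval_cases h : (minpoly ↥K x).natDegree <;> norm_num
  · rw [hfr]; omega

lemma chain_lemma (k : ℕ) (Fs : ℕ → Subfield ℝ)
    (hstep : ∀ i < k, ∃ x : ℝ, x ^ 2 ∈ Fs i ∧ Fs (i + 1) = Subfield.closure (↑(Fs i) ∪ {x})) :
    ∀ i, i ≤ k → Fs 0 ≤ Fs i ∧ Subfield.relfinrank (Fs 0) (Fs i) ∣ 2 ^ i ∧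
      Subfield.relfinrank (Fs 0) (Fs i) ≠ 0 := by
  intro i
  induction i with
  | zero => intro _; exact ⟨le_refl _, by simp, by simp⟩
  | succ i ih =>
    intro hik
    obtain ⟨hle, hdvd, hne⟩ := ih (by omega)
    obtain ⟨x, hx, hclo⟩ := hstep i (by omega)
    obtain ⟨hle2, hdvd2, hne2⟩ := step_lemma (Fs i) x hx
    rw [← hclo] at hle2 hdvd2 hne2
    refine ⟨hle.trans hle2, ?_, ?_⟩
    · rw [← Subfield.relfinrank_mul_relfinrank hle hle2, pow_succ]
      exact mul_dvd_mul hdvd hdvd2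
    · rw [← Subfield.relfinrank_mul_relfinrank hle hle2]
      exact mul_ne_zero hne hne2

lemma minpoly_natDegree_dvd (F K : Subfield ℝ) (hle : F ≤ K)
    (hfr : Subfield.relfinrank F K ≠ 0) (b : ℝ) (hb : b ∈ K) :
    IsIntegral ↥F b ∧ (minpoly ↥F b).natDegree ∣ Subfield.relfinrank F K := by
  have hfrE : finrank ↥F ↥(Subfield.extendScalars hle) = Subfield.relfinrank F K :=
    (Subfield.relfinrank_eq_finrank_of_le hle).symm
  haveI : FiniteDimensional ↥F ↥(Subfield.extendScalars hle) :=
    FiniteDimensional.of_finrank_pos (by rw [hfrE]; omega)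
  have hbE : b ∈ Subfield.extendScalars hle := by
    show b ∈ (Subfield.extendScalars hle).toSubfield
    rw [Subfield.extendScalars_toSubfield]
    exact hb
  have hint : IsIntegral ↥F (⟨b, hbE⟩ : ↥(Subfield.extendScalars hle)) :=
    IsIntegral.of_finite ↥F _
  have hmdvd : (minpoly ↥F (⟨b, hbE⟩ : ↥(Subfield.extendScalars hle))).natDegree ∣
      finrank ↥F ↥(Subfield.extendScalars hle) := minpoly.degree_dvd hint
  have hminEq : minpoly ↥F (⟨b, hbE⟩ : ↥(Subfield.extendScalars hle)) = minpoly ↥F b := by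
    have hinj : Function.Injective ⇑(algebraMap ↥(Subfield.extendScalars hle) ℝ) :=
      (algebraMap ↥(Subfield.extendScalars hle) ℝ).injective
    have := minpoly.algebraMap_eq (A := ↥F) hinj (⟨b, hbE⟩ : ↥(Subfield.extendScalars hle))
    rw [show (algebraMap ↥(Subfield.extendScalars hle) ℝ) ⟨b, hbE⟩ = b from rfl] at this
    exact this.symm
  constructor
  · have := hint.algebraMap (B := ℝ) (A := ↥(Subfield.extendScalars hle))
    rwa [show (algebraMap ↥(Subfield.extendScalars hle) ℝ) ⟨b, hbE⟩ = b from rfl] at this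
  · rw [← hminEq, ← hfrE]
    exact hmdvd

end MSectAux

open MSectAux Polynomial.Chebyshev Module in
/-- If `m` is not a power of 2, `|a| ≤ 1`, and some real `b` with
`T_m(b) = a` is constructible over the subfield `ℚ(a)` of `ℝ` generated by `a`,
then `a` is algebraic over `ℚ`. -/
theorem isAlgebraic_of_m_sectable (m : ℕ) (hm : 0 < m) (hm2 : ¬ ∃ k : ℕ, m = 2 ^ k)
    (a : ℝ) (ha : |a| ≤ 1)
    (hb : ∃ b : ℝ, (Chebyshev.T ℝ m).eval b = a ∧
      IsConstructibleOver (Subfield.closure {a}) b) :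
    IsAlgebraic ℚ a := by
  by_contra hAlg
  have hT : Transcendental ℚ a := hAlg
  obtain ⟨b, hTb, k, Fs, hFs0, hbk, hstep⟩ := hb
  set F : Subfield ℝ := Subfield.closure {a} with hF
  obtain ⟨hle, hdvd, hne⟩ := chain_lemma k Fs hstep k le_rfl
  rw [hFs0] at hle hdvd hne
  obtain ⟨hint, hmdvd⟩ := minpoly_natDegree_dvd F (Fs k) hle hne b hbk
  -- the minimal polynomial of `b` over `F` has degree `m`
  set aF : ↥F := ⟨a, Subfield.subset_closure (Set.mem_singleton a)⟩ with haF
  set qF : Polynomial ↥F := (T ↥F (m : ℤ)) - C aF with hqF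
  have hirr : Irreducible qF := qF_irred m hm a hT
  have haev : (aeval b) qF = 0 := by
    rw [hqF, map_sub, Polynomial.aeval_C]
    have h1 : (aeval b) (T ↥F (m : ℤ)) = (T ℝ (m : ℤ)).eval b := by
      rw [aeval_def, eval₂_eq_eval_map, map_T]
    rw [h1]
    show (T ℝ (m : ℤ)).eval b - a = 0
    rw [hTb]; ring
  have hmin : qF * C qF.leadingCoeff⁻¹ = minpoly ↥F b := minpoly.eq_of_irreducible hirr haev
  have hqFdeg : qF.natDegree = m := by
    have hTdeg : (T ↥F (m : ℤ)).natDegree = m := by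
      have hmap : T ↥F (m : ℤ) = (T ℚ (m : ℤ)).map (algebraMap ℚ ↥F) := (map_T _ _).symm
      rw [hmap, natDegree_map_eq_of_injective (algebraMap ℚ ↥F).injective]
      exact Tq_natDegree m hm
    rw [hqF]
    rw [natDegree_sub_eq_left_of_natDegree_lt, hTdeg]
    rw [hTdeg]
    have : (C aF).natDegree = 0 := natDegree_C _
    omega
  have hlcne : qF.leadingCoeff⁻¹ ≠ 0 := by
    have : qF ≠ 0 := hirr.ne_zero
    simpa using leadingCoeff_ne_zero.mpr this
  have hmindeg : (minpoly ↥F b).natDegree = m := by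
    rw [← hmin, natDegree_mul_C hlcne, hqFdeg]
  have hmd : m ∣ 2 ^ k := by
    rw [hmindeg] at hmdvd
    exact hmdvd.trans hdvd
  obtain ⟨j, hj, hmj⟩ := (Nat.dvd_prime_pow Nat.prime_two).mp hmd
  exact hm2 ⟨j, hmj⟩
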